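/- With a_n and S as above, for α > 1 and n ≤ N_ε the tail sum satisfies c₁ n^{1−α} ≤ S_{n,∞}(α) ≤ c₂ n^{1−α} for constants c₁, c₂ > 0 depending only on α and the constant K in K^{-1} ≤ ε N_ε ≤ K, independent of ε and n. -/

import Mathlib

set_option maxHeartbeats 1000000

open Real Finset

/-- tail sums in the polynomial regime, `α > 1`. With `a_n = 1/n` for
`n ≤ N_ε` and `a_n = ε(1+ε)^{−n}` for `n > N_ε`, `K⁻¹ ≤ εN_ε ≤ K`, there are
`c₁, c₂ > 0` depending only on `α` and `K` such that for `1 ≤ n ≤ N_ε`: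
`c₁ n^{1−α} ≤ Σ_{j≥n} a_j^α ≤ c₂ n^{1−α}`. -/
theorem stmt17 (α : ℝ) (hα : 1 < α) (K : ℝ) (hK : 1 ≤ K) :
    ∃ c₁ : ℝ, 0 < c₁ ∧ ∃ c₂ : ℝ, 0 < c₂ ∧
      ∀ ε : ℝ, 0 < ε → ε < 1 → ∀ Nε : ℕ, 1 ≤ Nε →
        K⁻¹ ≤ ε * Nε → ε * Nε ≤ K → ∀ a : ℕ → ℝ,
        (∀ n : ℕ, 1 ≤ n → n ≤ Nε → a n = 1 / n) →
        (∀ n : ℕ, Nε < n → a n = ε * (1 + ε) ^ (-(n : ℝ))) →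
        ∀ n : ℕ, 1 ≤ n → n ≤ Nε →
          c₁ * (n : ℝ) ^ (1 - α) ≤ (∑' j : ℕ, a (n + j) ^ α) ∧
          (∑' j : ℕ, a (n + j) ^ α) ≤ c₂ * (n : ℝ) ^ (1 - α) := by
  have hα0 : (0:ℝ) < α := by linarith
  have hK0 : (0:ℝ) < K := by linarith
  have hKα : (0:ℝ) < K ^ (α+1) := Real.rpow_pos_of_pos hK0 _
  set c : ℝ := Real.exp (-(α*(K+1))) / (α * K ^ (α+1)) with hc_def
  have hc0 : 0 < c := div_pos (Real.exp_pos _) (by positivity)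
  have hα1 : (0:ℝ) < (α-1)⁻¹ := inv_pos.mpr (by linarith)
  refine ⟨min ((α-1)⁻¹) c, lt_min hα1 hc0,
    1 + (α-1)⁻¹ + 2*K^(α+1), by positivity, ?_⟩
  intro ε hε hε1 Nε hNε hKlb hKub a ha1 ha2 n hn1 hnN
  -- basic positivity
  have hN0 : (0:ℝ) < Nε := by exact_mod_cast hNε
  have hn0 : (1:ℝ) ≤ n := by exact_mod_cast hn1
  have hnpos : (0:ℝ) < n := by linarith
  have hnNR : (n:ℝ) ≤ Nε := by exact_mod_cast hnN
  have h1ε : (0:ℝ) < 1 + ε := by linarith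
  set ρ : ℝ := (1+ε) ^ (-α) with hρ_def
  have hρ0 : 0 < ρ := Real.rpow_pos_of_pos h1ε _
  have hρ1 : ρ < 1 := Real.rpow_lt_one_of_one_lt_of_neg (by linarith) (by linarith)
  set m : ℕ := Nε + 1 - n with hm_def
  have hm1 : 1 ≤ m := by omega
  have hnm : n + m = Nε + 1 := by omega
  set f : ℕ → ℝ := fun j => a (n + j) ^ α with hf_def
  -- values in the polynomial regime
  have hval1 : ∀ j : ℕ, j < m → f j = ((n:ℝ) + j) ^ (-α) := by
    intro j hj
    have h1 : 1 ≤ n + j := by omega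
    have h2 : n + j ≤ Nε := by omega
    have hx : (0:ℝ) < ((n:ℝ) + j) := by positivity
    simp only [hf_def, ha1 (n+j) h1 h2, one_div]
    push_cast
    rw [Real.inv_rpow hx.le, ← Real.rpow_neg hx.le]
  -- values in the exponential regime
  have hval2 : ∀ j : ℕ, m ≤ j → f j = ε ^ α * ρ ^ (n + j) := by
    intro j hj
    have h1 : Nε < n + j := by omega
    simp only [hf_def, ha2 (n+j) h1]
    rw [Real.mul_rpow hε.le (Real.rpow_nonneg h1ε.le _),
      ← Real.rpow_natCast ρ (n+j), hρ_def, ← Real.rpow_mul h1ε.le,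
      ← Real.rpow_mul h1ε.le]
    push_cast
    ring_nf
  -- summability
  have hgeom : Summable (fun j : ℕ => ρ ^ j) := summable_geometric_of_lt_one hρ0.le hρ1
  have hsum : Summable f := by
    rw [← summable_nat_add_iff m]
    have : (fun j : ℕ => f (j + m)) = fun j : ℕ => (ε ^ α * ρ ^ (n+m)) * ρ ^ j := by
      funext j
      rw [hval2 (j + m) (by omega)]
      rw [show n + (j + m) = (n + m) + j by omega, pow_add]
      ring
    rw [this]
    exact hgeom.mul_left _
  have hsplit : (∑' j : ℕ, f j) = (∑ j ∈ range m, f j) + ∑' j : ℕ, f (j + m) :=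
    (hsum.sum_add_tsum_nat_add m).symm
  -- the geometric tail
  have htail : (∑' j : ℕ, f (j + m)) = ε ^ α * ρ ^ (Nε + 1) * (1 - ρ)⁻¹ := by
    have : (fun j : ℕ => f (j + m)) = fun j : ℕ => (ε ^ α * ρ ^ (Nε+1)) * ρ ^ j := by
      funext j
      rw [hval2 (j + m) (by omega)]
      rw [show n + (j + m) = (n + m) + j by omega, hnm, pow_add]
      ring
    rw [this, tsum_mul_left, tsum_geometric_of_lt_one hρ0.le hρ1]
  -- bounds relating ε, Nε, K
  have hεub : ε ≤ K * (Nε:ℝ)⁻¹ := by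
    rw [← div_eq_mul_inv, le_div_iff₀ hN0]; exact hKub
  have h1K : (1:ℝ) ≤ K * (ε * Nε) := by
    calc (1:ℝ) = K * K⁻¹ := by field_simp
    _ ≤ K * (ε * Nε) := by nlinarith [inv_pos.mpr hK0]
  have hεlb : (K * (Nε:ℝ))⁻¹ ≤ ε := by
    rw [← one_div, div_le_iff₀ (by positivity)]
    nlinarith
  -- ρ ≤ (1+ε)⁻¹ and 1 - ρ ≥ ε/2
  have hρle : ρ ≤ (1+ε)⁻¹ := by
    rw [hρ_def, ← Real.rpow_neg_one (1+ε)]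
    exact Real.rpow_le_rpow_of_exponent_le (by linarith) (by linarith)
  have h1ρlb : ε / 2 ≤ 1 - ρ := by
    have : (1+ε)⁻¹ ≤ 1 - ε/2 := by
      rw [← one_div, div_le_iff₀ h1ε]
      nlinarith
    linarith
  have h1ρpos : 0 < 1 - ρ := by linarith [hε]
  -- Bernoulli: 1 - α * ε ≤ ρ, hence 1 - ρ ≤ α * ε
  have hbern : 1 - ρ ≤ α * ε := by
    have hs : (-1:ℝ) ≤ -(ε/(1+ε)) := by
      rw [neg_le_neg_iff, div_le_one h1ε]; linarith
    have := one_add_mul_self_le_rpow_one_add hs hα.le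
    have he : (1 + -(ε/(1+ε))) = (1+ε)⁻¹ := by field_simp; ring
    rw [he, Real.inv_rpow h1ε.le, ← Real.rpow_neg h1ε.le] at this
    have h2 : 1 - α * ε ≤ 1 + α * -(ε/(1+ε)) := by
      rw [mul_neg]
      have : α * (ε/(1+ε)) ≤ α * ε := by
        apply mul_le_mul_of_nonneg_left _ hα0.le
        rw [div_le_iff₀ h1ε]; nlinarith
      linarith
    have h3 : 1 - α * ε ≤ ρ := le_trans h2 this
    linarith
  -- ρ ^ (Nε + 1) lower bound
  have hρpowlb : Real.exp (-(α*(K+1))) ≤ ρ ^ (Nε + 1) := by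
    have hlog : Real.log (1+ε) ≤ ε := by
      have := Real.log_le_sub_one_of_pos h1ε
      linarith
    have hlog0 : 0 ≤ Real.log (1+ε) := Real.log_nonneg (by linarith)
    have hkey : ρ ^ (Nε + 1) = Real.exp (Real.log (1+ε) * (-α * ((Nε:ℝ)+1))) := by
      rw [← Real.rpow_natCast ρ (Nε+1), hρ_def, ← Real.rpow_mul h1ε.le,
        Real.rpow_def_of_pos h1ε]
      push_cast
      ring_nf
    rw [hkey, Real.exp_le_exp]
    have hNK : ((Nε:ℝ)+1) * ε ≤ K + 1 := by nlinarith
    nlinarith [mul_le_mul_of_nonneg_left hlog (by positivity : (0:ℝ) ≤ α * ((Nε:ℝ)+1)),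
      mul_nonneg (mul_nonneg hα0.le (by positivity : (0:ℝ) ≤ (Nε:ℝ)+1)) hlog0]
  -- tail lower bound
  have hNν : (0:ℝ) < (Nε:ℝ) ^ (-α) := Real.rpow_pos_of_pos hN0 _
  have hεα_lb : K ^ (-α) * (Nε:ℝ) ^ (-α) ≤ ε ^ α := by
    have h1 : ((K * (Nε:ℝ))⁻¹) ^ α ≤ ε ^ α :=
      Real.rpow_le_rpow (by positivity) hεlb hα0.le
    calc K ^ (-α) * (Nε:ℝ) ^ (-α) = ((K * Nε)⁻¹) ^ α := by
          rw [Real.inv_rpow (by positivity), Real.mul_rpow hK0.le hN0.le,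
            Real.rpow_neg hK0.le, Real.rpow_neg hN0.le, mul_inv]
    _ ≤ ε ^ α := h1
  have hinv_lb : (Nε:ℝ) * (α * K)⁻¹ ≤ (1 - ρ)⁻¹ := by
    rw [← div_eq_mul_inv]
    have h2 : 0 < α * ε := by positivity
    have h3 : (α * ε)⁻¹ ≤ (1 - ρ)⁻¹ := by
      apply inv_anti₀ h1ρpos hbern
    refine le_trans ?_ h3
    rw [← one_div, div_le_div_iff₀ (by positivity) (by positivity)]
    nlinarith
  have hrw1 : K ^ (-α) * (α * K)⁻¹ = (α * K ^ (α+1))⁻¹ := by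
    rw [Real.rpow_add hK0, Real.rpow_one, Real.rpow_neg hK0.le]
    field_simp
  have hrw2 : (Nε:ℝ) ^ (-α) * Nε = (Nε:ℝ) ^ (1-α) := by
    nth_rewrite 2 [← Real.rpow_one (Nε:ℝ)]
    rw [← Real.rpow_add hN0]
    ring_nf
  have hTlb : c * (Nε:ℝ) ^ (1-α) ≤ ∑' j : ℕ, f (j + m) := by
    rw [htail]
    calc c * (Nε:ℝ) ^ (1-α)
        = (K ^ (-α) * (Nε:ℝ) ^ (-α)) * Real.exp (-(α*(K+1))) * ((Nε:ℝ) * (α * K)⁻¹) := by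
          rw [hc_def, div_eq_mul_inv, ← hrw2, ← hrw1]
          ring
    _ ≤ ε ^ α * ρ ^ (Nε+1) * (1 - ρ)⁻¹ := by
          apply mul_le_mul (mul_le_mul hεα_lb hρpowlb (Real.exp_pos _).le
            (Real.rpow_nonneg hε.le _)) hinv_lb
            (mul_nonneg hN0.le (inv_nonneg.mpr (by positivity)))
            (mul_nonneg (Real.rpow_nonneg hε.le _) (pow_nonneg hρ0.le _))
  -- tail upper bound
  have hεα_ub : ε ^ α ≤ K ^ α * (Nε:ℝ) ^ (-α) := by
    have h1 : ε ^ α ≤ (K * (Nε:ℝ)⁻¹) ^ α := Real.rpow_le_rpow hε.le hεub hα0.le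
    calc ε ^ α ≤ (K * (Nε:ℝ)⁻¹) ^ α := h1
    _ = K ^ α * (Nε:ℝ) ^ (-α) := by
        rw [Real.mul_rpow hK0.le (by positivity), Real.inv_rpow hN0.le,
          ← Real.rpow_neg hN0.le]
  have hinv_ub : (1 - ρ)⁻¹ ≤ 2 * K * Nε := by
    have h2 : (1 - ρ)⁻¹ ≤ (ε/2)⁻¹ := inv_anti₀ (by positivity) h1ρlb
    refine le_trans h2 ?_
    rw [inv_div, div_le_iff₀ hε]
    nlinarith
  have hTub : (∑' j : ℕ, f (j + m)) ≤ 2 * K^(α+1) * (Nε:ℝ) ^ (1-α) := by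
    rw [htail]
    have hpow1 : ρ ^ (Nε+1) ≤ 1 := pow_le_one₀ hρ0.le hρ1.le
    calc ε ^ α * ρ ^ (Nε+1) * (1 - ρ)⁻¹
        ≤ (K ^ α * (Nε:ℝ) ^ (-α)) * 1 * (2 * K * Nε) := by
          apply mul_le_mul (mul_le_mul hεα_ub hpow1 (by positivity)
            (by positivity)) hinv_ub (by positivity) (by positivity)
    _ = 2 * K^(α+1) * (Nε:ℝ) ^ (1-α) := by
          rw [← hrw2, Real.rpow_add hK0, Real.rpow_one]
          ring
  -- finite part: antitone function
  have hanti : ∀ b : ℕ, AntitoneOn (fun x : ℝ => x ^ (-α)) (Set.Icc (n:ℝ) ((n:ℝ) + b)) := by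
    intro b
    apply (Real.antitoneOn_rpow_Ioi_of_exponent_nonpos (by linarith)).mono
    intro x hx
    simp only [Set.mem_Ioi]
    have := hx.1
    linarith
  -- finite part lower bound
  have hFeq : (∑ j ∈ range m, f j) = ∑ j ∈ range m, ((n:ℝ) + j) ^ (-α) := by
    apply Finset.sum_congr rfl
    intro j hj
    exact hval1 j (mem_range.mp hj)
  have hIntVal : ∀ b : ℕ, (∫ x in (n:ℝ)..((n:ℝ)+b), x ^ (-α)) =
      (((n:ℝ)+b) ^ (1-α) - (n:ℝ) ^ (1-α)) / (1-α) := by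
    intro b
    have hb0 : (0:ℝ) ≤ (b:ℝ) := Nat.cast_nonneg b
    have hne : -α ≠ -1 := by
      intro h
      have h' : α = 1 := by linarith
      rw [h'] at hα
      exact lt_irrefl 1 hα
    have h0 : (0:ℝ) ∉ Set.uIcc (n:ℝ) ((n:ℝ)+b) := by
      rw [Set.uIcc_of_le (by linarith)]
      intro hmem
      exact absurd (Set.mem_Icc.mp hmem).1 (by push_neg; linarith)
    rw [integral_rpow (Or.inr ⟨hne, h0⟩), show -α + 1 = 1 - α by ring]
  have hFlb : ((n:ℝ) ^ (1-α) - ((Nε:ℝ)+1) ^ (1-α)) / (α-1) ≤ ∑ j ∈ range m, f j := by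
    rw [hFeq]
    have h1 := (hanti m).integral_le_sum
    rw [hIntVal m] at h1
    have h2 : ((n:ℝ) + m) = (Nε:ℝ) + 1 := by
      have h := congrArg (fun k : ℕ => (k:ℝ)) hnm
      push_cast at h
      linarith
    rw [h2] at h1
    refine le_trans (le_of_eq ?_) h1
    rw [div_eq_div_iff (by intro h; rw [sub_eq_zero] at h; linarith : (α-1) ≠ 0)
      (by intro h; rw [sub_eq_zero] at h; linarith : (1-α) ≠ 0)]
    ring
  -- finite part upper bound
  have hFub : (∑ j ∈ range m, f j) ≤ (n:ℝ) ^ (-α) + (n:ℝ) ^ (1-α) / (α-1) := by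
    rw [hFeq]
    obtain ⟨m', hm'⟩ : ∃ m', m = m' + 1 := ⟨m - 1, by omega⟩
    rw [hm', Finset.sum_range_succ']
    have h1 := (hanti m').sum_le_integral
    rw [hIntVal m'] at h1
    have hnm' : (0:ℝ) < (n:ℝ) + m' := by positivity
    have hX0 : (0:ℝ) ≤ ((n:ℝ)+m') ^ (1-α) := Real.rpow_nonneg hnm'.le _
    have h3 : (((n:ℝ)+m') ^ (1-α) - (n:ℝ) ^ (1-α)) / (1-α) ≤ (n:ℝ) ^ (1-α) / (α-1) := by
      rw [show (((n:ℝ)+m') ^ (1-α) - (n:ℝ) ^ (1-α)) / (1-α)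
            = ((n:ℝ) ^ (1-α) - ((n:ℝ)+m') ^ (1-α)) / (α-1) by
          rw [div_eq_div_iff (by intro h; rw [sub_eq_zero] at h; linarith : (1-α) ≠ 0)
            (by intro h; rw [sub_eq_zero] at h; linarith : (α-1) ≠ 0)]
          ring]
      apply div_le_div_of_nonneg_right ?_ (by linarith)
      linarith
    have h4 := le_trans h1 h3
    push_cast at h4 ⊢
    rw [add_zero]
    linarith
  -- assemble
  have hS : (∑' j : ℕ, a (n + j) ^ α) = (∑ j ∈ range m, f j) + ∑' j : ℕ, f (j + m) := hsplit
  have hAB : ((Nε:ℝ)+1) ^ (1-α) ≤ (n:ℝ) ^ (1-α) :=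
    Real.rpow_le_rpow_of_nonpos hnpos (by linarith) (by linarith)
  have hBB : ((Nε:ℝ)+1) ^ (1-α) ≤ (Nε:ℝ) ^ (1-α) :=
    Real.rpow_le_rpow_of_nonpos hN0 (by linarith) (by linarith)
  have hNn : (Nε:ℝ) ^ (1-α) ≤ (n:ℝ) ^ (1-α) :=
    Real.rpow_le_rpow_of_nonpos hnpos hnNR (by linarith)
  have hnn : (n:ℝ) ^ (-α) ≤ (n:ℝ) ^ (1-α) :=
    Real.rpow_le_rpow_of_exponent_le hn0 (by linarith)
  have hB0 : (0:ℝ) ≤ ((Nε:ℝ)+1) ^ (1-α) := Real.rpow_nonneg (by positivity) _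
  have hN1α0 : (0:ℝ) ≤ (Nε:ℝ) ^ (1-α) := Real.rpow_nonneg hN0.le _
  constructor
  · -- lower bound
    rw [hS]
    set A := (n:ℝ) ^ (1-α)
    set B := ((Nε:ℝ)+1) ^ (1-α)
    set B' := (Nε:ℝ) ^ (1-α)
    have hmin1 : min ((α-1)⁻¹) c ≤ (α-1)⁻¹ := min_le_left _ _
    have hmin2 : min ((α-1)⁻¹) c ≤ c := min_le_right _ _
    have hminpos : 0 < min ((α-1)⁻¹) c := lt_min (by positivity) hc0
    have h1 : min ((α-1)⁻¹) c * (A - B) ≤ (A - B) / (α-1) := by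
      rw [div_eq_inv_mul]
      apply mul_le_mul_of_nonneg_right hmin1 (by linarith)
    have h2 : min ((α-1)⁻¹) c * B ≤ c * B' := by
      calc min ((α-1)⁻¹) c * B ≤ c * B := mul_le_mul_of_nonneg_right hmin2 hB0
      _ ≤ c * B' := mul_le_mul_of_nonneg_left hBB hc0.le
    have h3 : (A - B) / (α-1) ≤ ∑ j ∈ range m, f j := hFlb
    have h4 : c * B' ≤ ∑' j : ℕ, f (j + m) := hTlb
    have h5 : min ((α-1)⁻¹) c * A = min ((α-1)⁻¹) c * (A - B) + min ((α-1)⁻¹) c * B := by ring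
    linarith
  · -- upper bound
    rw [hS]
    have h3 : (∑ j ∈ range m, f j) ≤ (n:ℝ) ^ (-α) + (n:ℝ) ^ (1-α) / (α-1) := hFub
    have h4 : (∑' j : ℕ, f (j + m)) ≤ 2 * K^(α+1) * (Nε:ℝ) ^ (1-α) := hTub
    have h5 : 2 * K^(α+1) * (Nε:ℝ) ^ (1-α) ≤ 2 * K^(α+1) * (n:ℝ) ^ (1-α) :=
      mul_le_mul_of_nonneg_left hNn (by positivity)
    have h6 : (n:ℝ) ^ (1-α) / (α-1) = (α-1)⁻¹ * (n:ℝ) ^ (1-α) := by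
      rw [div_eq_inv_mul]
    have h7 : (1 + (α-1)⁻¹ + 2*K^(α+1)) * (n:ℝ) ^ (1-α)
        = (n:ℝ) ^ (1-α) + (α-1)⁻¹ * (n:ℝ) ^ (1-α) + 2*K^(α+1) * (n:ℝ) ^ (1-α) := by ring
    rw [h7]
    linarith
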